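/- Universality of single-hidden-layer networks with the Cauchy activation function: Define, for real parameters λ₁, λ₂ and d ≠ 0, the Cauchy activation function φ_{λ₁,λ₂,d} : ℝ → ℝ by φ_{λ₁,λ₂,d}(t) = λ₁·t/(t² + d²) + λ₂/(t² + d²). Then for every positive integer N, every compact set K ⊆ ℝ^N, every continuous function g : K → ℝ, and every ε > 0, there exist a natural number m ≥ 1, parameters λ₁^{(k)}, λ₂^{(k)} ∈ ℝ, d_k ∈ ℝ with d_k ≠ 0, weight vectors a^{(k)} ∈ ℝ^N, biases b_k ∈ ℝ, and real output coefficients c_k, for k = 1, …, m, such that sup_{x ∈ K} |g(x) − ∑_{k=1}^m c_k · φ_{λ₁^{(k)}, λ₂^{(k)}, d_k}(a^{(k)}·x + b_k)| < ε. -/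

import Mathlib

/-- The Cauchy activation function
`φ_{λ₁,λ₂,d}(t) = λ₁·t/(t² + d²) + λ₂/(t² + d²)`. -/
noncomputable def cauchyActivation (l1 l2 d : ℝ) (t : ℝ) : ℝ :=
  l1 * t / (t ^ 2 + d ^ 2) + l2 / (t ^ 2 + d ^ 2)

lemma cn_denom_pos (d t : ℝ) (hd : d ≠ 0) : 0 < t ^ 2 + d ^ 2 :=
  add_pos_of_nonneg_of_pos (sq_nonneg t) (lt_of_le_of_ne (sq_nonneg d) (Ne.symm (pow_ne_zero 2 hd)))

lemma cn_continuous (l1 l2 d : ℝ) (hd : d ≠ 0) : Continuous (cauchyActivation l1 l2 d) := by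
  have h : ∀ t : ℝ, t ^ 2 + d ^ 2 ≠ 0 := fun t => (cn_denom_pos d t hd).ne'
  unfold cauchyActivation
  exact ((continuous_const.mul continuous_id).div (by continuity) h).add
    (continuous_const.div (by continuity) h)

noncomputable def cactC (l1 l2 d : ℝ) (hd : d ≠ 0) : C(ℝ, ℝ) :=
  ⟨cauchyActivation l1 l2 d, cn_continuous l1 l2 d hd⟩

lemma cn_mul (l1 l2 l1' l2' d1 d2 : ℝ) (h1 : d1 ≠ 0) (h2 : d2 ≠ 0)
    (hne : d1 ^ 2 ≠ d2 ^ 2) (t : ℝ) :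
    cauchyActivation l1 l2 d1 t * cauchyActivation l1' l2' d2 t =
      cauchyActivation ((l1*l2' + l2*l1')/(d2^2 - d1^2)) ((l2*l2' - d1^2*(l1*l1'))/(d2^2 - d1^2)) d1 t
      + cauchyActivation (-((l1*l2' + l2*l1')/(d2^2 - d1^2))) ((d2^2*(l1*l1') - l2*l2')/(d2^2 - d1^2)) d2 t := by
  have hD : d2 ^ 2 - d1 ^ 2 ≠ 0 := sub_ne_zero.mpr (Ne.symm hne)
  have e1 : t ^ 2 + d1 ^ 2 ≠ 0 := (cn_denom_pos d1 t h1).ne'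
  have e2 : t ^ 2 + d2 ^ 2 ≠ 0 := (cn_denom_pos d2 t h2).ne'
  unfold cauchyActivation
  field_simp
  ring

-- pointwise estimate
lemma cn_pt_est (l1 l2 d d' t R : ℝ) (hd : d ≠ 0) (hd' : d' ≠ 0) (hle : d^2 ≤ d'^2)
    (ht : |t| ≤ R) :
    |cauchyActivation l1 l2 d' t - cauchyActivation l1 l2 d t|
      ≤ (|l1| * R + |l2|) * (d'^2 - d^2) / (d^2 * d^2) := by
  have e1 : t ^ 2 + d ^ 2 ≠ 0 := (cn_denom_pos d t hd).ne'
  have e2 : t ^ 2 + d' ^ 2 ≠ 0 := (cn_denom_pos d' t hd').ne'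
  have hdiff : cauchyActivation l1 l2 d' t - cauchyActivation l1 l2 d t
      = (l1*t + l2) * (d^2 - d'^2) / ((t^2+d'^2)*(t^2+d^2)) := by
    unfold cauchyActivation; field_simp; ring
  rw [hdiff, abs_div, abs_mul]
  have hR : 0 ≤ R := (abs_nonneg t).trans ht
  have h1 : |l1 * t + l2| ≤ |l1| * R + |l2| := by
    calc |l1 * t + l2| ≤ |l1 * t| + |l2| := abs_add_le _ _
    _ ≤ |l1| * R + |l2| := by
        rw [abs_mul]
        have := mul_le_mul_of_nonneg_left ht (abs_nonneg l1)
        linarith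
  have h2 : |d^2 - d'^2| = d'^2 - d^2 := by
    rw [abs_sub_comm]; exact abs_of_nonneg (sub_nonneg.mpr hle)
  rw [h2, abs_of_pos (mul_pos (cn_denom_pos d' t hd') (cn_denom_pos d t hd))]
  have hdenle : d^2 * d^2 ≤ (t^2+d'^2)*(t^2+d^2) := by nlinarith [sq_nonneg t, sq_nonneg d, sq_nonneg d']
  have hd2 : (0:ℝ) < d^2*d^2 := by positivity
  refine div_le_div₀ (mul_nonneg (by positivity) (sub_nonneg.mpr hle)) ?_ hd2 hdenle
  exact mul_le_mul_of_nonneg_right h1 (sub_nonneg.mpr hle)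

open Filter Topology

lemma cn_norm_est (X : Set ℝ) [CompactSpace X] (R : ℝ) (hR0 : 0 ≤ R) (hR : ∀ t ∈ X, |t| ≤ R)
    (l1 l2 d d' : ℝ) (hd : d ≠ 0) (hd' : d' ≠ 0) (hle : d^2 ≤ d'^2) :
    ‖(cactC l1 l2 d' hd').restrict X - (cactC l1 l2 d hd).restrict X‖
      ≤ (|l1| * R + |l2|) * (d'^2 - d^2) / (d^2 * d^2) := by
  have hb : 0 ≤ (|l1| * R + |l2|) * (d'^2 - d^2) / (d^2 * d^2) :=
    div_nonneg (mul_nonneg (by positivity) (sub_nonneg.mpr hle)) (by positivity)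
  rw [ContinuousMap.norm_le _ hb]
  intro x
  have : ((cactC l1 l2 d' hd').restrict X - (cactC l1 l2 d hd).restrict X) x
      = cauchyActivation l1 l2 d' (x : ℝ) - cauchyActivation l1 l2 d (x : ℝ) := by
    simp [cactC, ContinuousMap.restrict_apply]
  rw [this, Real.norm_eq_abs]
  exact cn_pt_est l1 l2 d d' (x : ℝ) R hd hd' hle (hR _ x.2)

lemma cn_tendsto (X : Set ℝ) [CompactSpace X] (R : ℝ) (hR0 : 0 ≤ R) (hR : ∀ t ∈ X, |t| ≤ R)
    (l1 l2 d : ℝ) (hd : d ≠ 0) (u : ℕ → ℝ) (hu : ∀ n, u n ≠ 0)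
    (hle : ∀ n, d^2 ≤ (u n)^2) (husq : Filter.Tendsto (fun n => (u n)^2) Filter.atTop (nhds (d^2))) :
    Filter.Tendsto (fun n => (cactC l1 l2 (u n) (hu n)).restrict X) Filter.atTop
      (nhds ((cactC l1 l2 d hd).restrict X)) := by
  rw [tendsto_iff_norm_sub_tendsto_zero]
  apply squeeze_zero (fun n => norm_nonneg _)
    (g := fun n => (|l1| * R + |l2|) * ((u n)^2 - d^2) / (d^2 * d^2))
    (fun n => cn_norm_est X R hR0 hR l1 l2 d (u n) hd (hu n) (hle n))
  have hcont : Continuous (fun s : ℝ => (|l1| * R + |l2|) * (s - d^2) / (d^2 * d^2)) := by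
    continuity
  have := (hcont.tendsto (d^2)).comp husq
  simpa [Function.comp_def] using this

lemma cn_tendsto_one (X : Set ℝ) [CompactSpace X] (R : ℝ) (hR0 : 0 ≤ R) (hR : ∀ t ∈ X, |t| ≤ R) :
    Filter.Tendsto (fun n : ℕ => (cactC 0 (((n:ℝ)+1)^2) ((n:ℝ)+1) (by positivity)).restrict X)
      Filter.atTop (nhds (1 : C(X, ℝ))) := by
  rw [tendsto_iff_norm_sub_tendsto_zero]
  apply squeeze_zero (fun n => norm_nonneg _) (g := fun n : ℕ => R^2 / ((n:ℝ)+1)^2)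
  · intro n
    have hc : ((n:ℝ)+1) ≠ 0 := by positivity
    have hb : (0:ℝ) ≤ R^2 / ((n:ℝ)+1)^2 := by positivity
    rw [ContinuousMap.norm_le _ hb]
    intro x
    have hval : ((cactC 0 (((n:ℝ)+1)^2) ((n:ℝ)+1) (by positivity)).restrict X - 1) x
        = cauchyActivation 0 (((n:ℝ)+1)^2) ((n:ℝ)+1) (x:ℝ) - 1 := by
      simp [cactC, ContinuousMap.restrict_apply]
    have hden : ((x:ℝ)^2 + ((n:ℝ)+1)^2) ≠ 0 := (cn_denom_pos _ _ hc).ne'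
    have hid : cauchyActivation 0 (((n:ℝ)+1)^2) ((n:ℝ)+1) (x:ℝ) - 1
        = -((x:ℝ)^2) / ((x:ℝ)^2 + ((n:ℝ)+1)^2) := by
      unfold cauchyActivation; field_simp; ring
    rw [hval, hid, Real.norm_eq_abs, abs_div, abs_neg, abs_of_pos (cn_denom_pos _ _ hc),
      abs_of_nonneg (sq_nonneg _)]
    have hx2 : (x:ℝ)^2 ≤ R^2 := by
      have := hR _ x.2
      nlinarith [abs_nonneg (x:ℝ), sq_abs (x:ℝ)]
    have : ((n:ℝ)+1)^2 ≤ (x:ℝ)^2 + ((n:ℝ)+1)^2 := by nlinarith [sq_nonneg (x:ℝ)]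
    exact div_le_div₀ (by positivity) hx2 (by positivity) this
  · have h : Filter.Tendsto (fun n : ℕ => 1 / ((n:ℝ) + 1)) Filter.atTop (nhds 0) := tendsto_one_div_add_atTop_nhds_zero_nat
    have h2 := (h.mul h).const_mul (R^2)
    simp only [mul_zero] at h2
    apply h2.congr
    intro n
    have hc : ((n:ℝ)+1) ≠ 0 := by positivity
    field_simp

lemma cn_bound (X : Set ℝ) (hX : IsCompact X) : ∃ R : ℝ, 0 ≤ R ∧ ∀ t ∈ X, |t| ≤ R := by
  obtain ⟨r, hr⟩ := hX.isBounded.subset_closedBall 0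
  refine ⟨max r 0, le_max_right _ _, fun t ht => ?_⟩
  have := hr ht
  rw [Metric.mem_closedBall, Real.dist_eq, sub_zero] at this
  exact this.trans (le_max_left _ _)

def cnGens (X : Set ℝ) : Set C(X, ℝ) :=
  {f | ∃ l1 l2 d, ∃ hd : d ≠ 0, f = (cactC l1 l2 d hd).restrict X}

theorem cn_onedim (X : Set ℝ) (hX : IsCompact X) (h : C(X, ℝ)) :
    h ∈ closure ((Submodule.span ℝ (cnGens X) : Submodule ℝ C(X, ℝ)) : Set C(X, ℝ)) := by
  haveI : CompactSpace X := isCompact_iff_compactSpace.mp hX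
  obtain ⟨R, hR0, hR⟩ := cn_bound X hX
  set M := (Submodule.span ℝ (cnGens X)).topologicalClosure with hMdef
  have hMset : (M : Set C(X, ℝ)) = closure ((Submodule.span ℝ (cnGens X) : Submodule ℝ C(X,ℝ)) : Set C(X,ℝ)) :=
    Submodule.topologicalClosure_coe _
  -- 1 ∈ M
  have hone : (1 : C(X, ℝ)) ∈ M := by
    rw [← SetLike.mem_coe, hMset]
    refine mem_closure_of_tendsto (cn_tendsto_one X R hR0 hR) ?_
    exact Filter.Eventually.of_forall fun n =>
      Submodule.subset_span ⟨0, ((n:ℝ)+1)^2, ((n:ℝ)+1), by positivity, rfl⟩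
  -- generator products
  have hmulgen : ∀ f ∈ cnGens X, ∀ g ∈ cnGens X, f * g ∈ M := by
    rintro f ⟨l1, l2, d1, hd1, rfl⟩ g ⟨l1', l2', d2, hd2, rfl⟩
    have key : ∀ (d2' : ℝ) (hd2' : d2' ≠ 0), d1^2 ≠ d2'^2 →
        (cactC l1 l2 d1 hd1).restrict X * (cactC l1' l2' d2' hd2').restrict X
          ∈ Submodule.span ℝ (cnGens X) := by
      intro d2' hd2' hne
      have heq : (cactC l1 l2 d1 hd1).restrict X * (cactC l1' l2' d2' hd2').restrict X
          = (cactC ((l1*l2' + l2*l1')/(d2'^2 - d1^2)) ((l2*l2' - d1^2*(l1*l1'))/(d2'^2 - d1^2)) d1 hd1).restrict X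
            + (cactC (-((l1*l2' + l2*l1')/(d2'^2 - d1^2))) ((d2'^2*(l1*l1') - l2*l2')/(d2'^2 - d1^2)) d2' hd2').restrict X := by
        ext t
        simp only [ContinuousMap.mul_apply, ContinuousMap.add_apply,
          ContinuousMap.restrict_apply, cactC, ContinuousMap.coe_mk]
        exact cn_mul l1 l2 l1' l2' d1 d2' hd1 hd2' hne (t : ℝ)
      rw [heq]
      exact Submodule.add_mem _
        (Submodule.subset_span ⟨_, _, d1, hd1, rfl⟩)
        (Submodule.subset_span ⟨_, _, d2', hd2', rfl⟩)
    by_cases hdd : d1^2 = d2^2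
    · -- limit argument
      set u : ℕ → ℝ := fun n => d2 * (1 + 1/((n:ℝ)+1)) with hu_def
      have hupos : ∀ n : ℕ, (0:ℝ) < 1/((n:ℝ)+1) := fun n => by positivity
      have hu : ∀ n, u n ≠ 0 := fun n =>
        mul_ne_zero hd2 (by have := hupos n; positivity)
      have hlt : ∀ n, d2^2 < (u n)^2 := by
        intro n
        have h1 := hupos n
        have h2 : d2^2 > 0 := lt_of_le_of_ne (sq_nonneg d2) (Ne.symm (pow_ne_zero 2 hd2))
        have h3 : (u n)^2 = d2^2 * (1 + 1/((n:ℝ)+1))^2 := by rw [hu_def]; ring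
        rw [h3]
        nlinarith [mul_pos h2 h1, mul_nonneg h2.le (sq_nonneg (1/((n:ℝ)+1)))]
      have hle : ∀ n, d2^2 ≤ (u n)^2 := fun n => (hlt n).le
      have husq : Filter.Tendsto (fun n => (u n)^2) Filter.atTop (nhds (d2^2)) := by
        have hc : Continuous (fun s : ℝ => d2^2 * (1 + s)^2) := by continuity
        have h' := (hc.tendsto 0).comp tendsto_one_div_add_atTop_nhds_zero_nat
        have hfe : (fun n : ℕ => (u n)^2)
            = ((fun s : ℝ => d2^2 * (1 + s)^2) ∘ fun n : ℕ => 1/((n:ℝ)+1)) := by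
          funext n
          show (d2 * (1 + 1/((n:ℝ)+1)))^2 = d2^2 * (1 + 1/((n:ℝ)+1))^2
          ring
        rw [hfe]
        convert h' using 2
        norm_num
      have htend := cn_tendsto X R hR0 hR l1' l2' d2 hd2 u hu hle husq
      rw [← SetLike.mem_coe, hMset]
      refine mem_closure_of_tendsto (tendsto_const_nhds.mul htend) ?_
      refine Filter.Eventually.of_forall fun n => ?_
      refine key (u n) (hu n) ?_
      have := hlt n
      rw [← hdd] at this
      exact this.ne
    · exact Submodule.le_topologicalClosure _ (key d2 hd2 hdd)
  -- products of span elements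
  have hmulspan : ∀ f ∈ Submodule.span ℝ (cnGens X), ∀ g ∈ Submodule.span ℝ (cnGens X),
      f * g ∈ M := by
    have step1 : ∀ g ∈ cnGens X, ∀ f ∈ Submodule.span ℝ (cnGens X), f * g ∈ M := by
      intro g hg f hf
      induction hf using Submodule.span_induction with
      | mem x hx => exact hmulgen x hx g hg
      | zero => rw [zero_mul]; exact M.zero_mem
      | add x y _ _ hx hy => rw [add_mul]; exact M.add_mem hx hy
      | smul c x _ hx => rw [smul_mul_assoc]; exact M.smul_mem c hx
    intro f hf g hg
    induction hg using Submodule.span_induction with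
    | mem x hx => exact step1 x hx f hf
    | zero => rw [mul_zero]; exact M.zero_mem
    | add x y _ _ hx hy => rw [mul_add]; exact M.add_mem hx hy
    | smul c x _ hx => rw [mul_smul_comm]; exact M.smul_mem c hx
  -- closure under multiplication
  have hmul : ∀ x y : C(X, ℝ), x ∈ M → y ∈ M → x * y ∈ M := by
    intro x y hx hy
    rw [← SetLike.mem_coe, hMset] at hx hy ⊢
    have hcl : closure ((M : Set C(X,ℝ))) = (M : Set C(X,ℝ)) :=
      (Submodule.isClosed_topologicalClosure _).closure_eq
    have := map_mem_closure₂ (f := fun a b : C(X, ℝ) => a * b) continuous_mul hx hy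
      (u := (M : Set C(X,ℝ))) (fun a ha b hb => hmulspan a ha b hb)
    rw [hcl] at this
    rw [← hMset]
    exact this
  -- the subalgebra
  let A : Subalgebra ℝ C(X, ℝ) := M.toSubalgebra hone hmul
  have hsep : A.SeparatesPoints := by
    intro x y hxy
    have hxy' : (x : ℝ) ≠ (y : ℝ) := fun hc => hxy (Subtype.ext hc)
    have hgen : ∀ l1 l2 : ℝ, (cactC l1 l2 1 one_ne_zero).restrict X ∈ (A : Set C(X,ℝ)) := by
      intro l1 l2
      exact Submodule.le_topologicalClosure _ (Submodule.subset_span ⟨l1, l2, 1, one_ne_zero, rfl⟩)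
    have hpx : (0:ℝ) < (x:ℝ)^2 + 1 := by positivity
    have hpy : (0:ℝ) < (y:ℝ)^2 + 1 := by positivity
    by_cases hsq : (x:ℝ)^2 = (y:ℝ)^2
    · -- use t/(t²+1)
      refine ⟨_, ⟨(cactC 1 0 1 one_ne_zero).restrict X, hgen 1 0, rfl⟩, ?_⟩
      simp only [ContinuousMap.restrict_apply, cactC, ContinuousMap.coe_mk]
      unfold cauchyActivation
      rw [hsq]
      intro hc
      apply hxy'
      have hny : ((y:ℝ)^2+1) ≠ 0 := by positivity
      field_simp at hc
      linarith
    · -- use 1/(t²+1)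
      refine ⟨_, ⟨(cactC 0 1 1 one_ne_zero).restrict X, hgen 0 1, rfl⟩, ?_⟩
      simp only [ContinuousMap.restrict_apply, cactC, ContinuousMap.coe_mk]
      unfold cauchyActivation
      intro hc
      apply hsq
      have hnx : ((x:ℝ)^2+1) ≠ 0 := by positivity
      have hny : ((y:ℝ)^2+1) ≠ 0 := by positivity
      field_simp at hc
      linarith
  have htop := ContinuousMap.subalgebra_topologicalClosure_eq_top_of_separatesPoints A hsep
  have h1 : h ∈ A.topologicalClosure := by rw [htop]; trivial
  have h2 : h ∈ closure (A : Set C(X, ℝ)) := h1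
  have h3 : (A : Set C(X, ℝ)) = (M : Set C(X, ℝ)) := rfl
  rw [h3, hMset, closure_closure] at h2
  exact h2


/-- **Universality of single-hidden-layer networks with the Cauchy activation
function.** Every continuous function on a compact `K ⊆ ℝ^N` can be uniformly
approximated by a single-hidden-layer network with Cauchy activations. -/
theorem cauchy_network_universal (N : ℕ) (hN : 0 < N)
    (K : Set (Fin N → ℝ)) (hK : IsCompact K)
    (g : (Fin N → ℝ) → ℝ) (hg : ContinuousOn g K) :
    ∀ ε > 0, ∃ m : ℕ, 1 ≤ m ∧
      ∃ (l1 l2 d : Fin m → ℝ) (a : Fin m → Fin N → ℝ) (b c : Fin m → ℝ),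
        (∀ k, d k ≠ 0) ∧
        ∀ x ∈ K,
          |g x - ∑ k, c k *
            cauchyActivation (l1 k) (l2 k) (d k) ((∑ j, a k j * x j) + b k)| < ε := by
  intro ε hε
  haveI : CompactSpace K := isCompact_iff_compactSpace.mp hK
  let g' : C(K, ℝ) := ⟨K.restrict g, hg.restrict⟩
  set net : Set C(K, ℝ) := {f | ∃ (l1 l2 d : ℝ) (_ : d ≠ 0) (a : Fin N → ℝ) (b : ℝ),
    ∀ x : K, f x = cauchyActivation l1 l2 d ((∑ j, a j * (x : Fin N → ℝ) j) + b)} with hnet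
  have hLcont : ∀ a : Fin N → ℝ, Continuous (fun x : K => ∑ j, a j * (x : Fin N → ℝ) j) := by
    intro a
    exact continuous_finset_sum _ fun j _ =>
      continuous_const.mul ((continuous_apply j).comp continuous_subtype_val)
  let ridge : (Fin N → ℝ) → C(K, ℝ) := fun a =>
    ⟨fun x => Real.exp (∑ j, a j * (x : Fin N → ℝ) j), Real.continuous_exp.comp (hLcont a)⟩
  have hridge_mem : ∀ a, ridge a ∈ closure ((Submodule.span ℝ net : Submodule ℝ C(K,ℝ)) : Set C(K,ℝ)) := by
    intro a
    rw [Metric.mem_closure_iff]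
    intro δ hδ
    let L : C(K, ℝ) := ⟨fun x => ∑ j, a j * (x : Fin N → ℝ) j, hLcont a⟩
    have hX1 : IsCompact (Set.range L) := isCompact_range L.continuous
    let E : C(Set.range L, ℝ) :=
      ContinuousMap.restrict (Set.range L) ⟨Real.exp, Real.continuous_exp⟩
    haveI : CompactSpace (Set.range L) := isCompact_iff_compactSpace.mp hX1
    have hE := cn_onedim (Set.range L) hX1 E
    rw [Metric.mem_closure_iff] at hE
    obtain ⟨f₁, hf₁mem, hf₁⟩ := hE δ hδ
    let L' : C(K, Set.range L) :=
      ⟨fun x => ⟨L x, Set.mem_range_self x⟩, L.continuous.subtype_mk _⟩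
    let Φ : C(Set.range L, ℝ) →ₗ[ℝ] C(K, ℝ) :=
      { toFun := fun f => f.comp L'
        map_add' := fun f g => by ext x; simp
        map_smul' := fun r f => by ext x; simp }
    refine ⟨Φ f₁, ?_, ?_⟩
    · have himg : Φ '' (cnGens (Set.range L)) ⊆ net := by
        rintro _ ⟨f, ⟨l1, l2, d, hd, rfl⟩, rfl⟩
        refine ⟨l1, l2, d, hd, a, 0, fun x => ?_⟩
        show ((cactC l1 l2 d hd).restrict (Set.range L)).comp L' x = _
        simp only [ContinuousMap.comp_apply, ContinuousMap.restrict_apply, cactC,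
          ContinuousMap.coe_mk, add_zero]
        rfl
      have hmem : Φ f₁ ∈ Submodule.map Φ (Submodule.span ℝ (cnGens (Set.range L))) :=
        Submodule.mem_map_of_mem hf₁mem
      rw [Submodule.map_span] at hmem
      exact Submodule.span_mono himg hmem
    · rw [ContinuousMap.dist_lt_iff hδ]
      intro x
      have h1 : ridge a x = E (L' x) := rfl
      have h2 : Φ f₁ x = f₁ (L' x) := rfl
      rw [h1, h2]
      exact lt_of_le_of_lt (ContinuousMap.dist_apply_le_dist _) hf₁
  -- ridge functions form a submonoid
  let RSm : Submonoid C(K, ℝ) :=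
    { carrier := Set.range ridge
      one_mem' := ⟨0, by ext x; simp [ridge]⟩
      mul_mem' := by
        rintro _ _ ⟨a, rfl⟩ ⟨b, rfl⟩
        refine ⟨a + b, ?_⟩
        ext x
        simp only [ridge, ContinuousMap.mul_apply, ContinuousMap.coe_mk]
        rw [← Real.exp_add, ← Finset.sum_add_distrib]
        congr 1
        exact Finset.sum_congr rfl fun j _ => by simp [add_mul] }
  set F := (Submodule.span ℝ net).topologicalClosure with hF
  have hFset : (F : Set C(K,ℝ)) = closure ((Submodule.span ℝ net : Submodule ℝ C(K,ℝ)) : Set C(K,ℝ)) :=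
    Submodule.topologicalClosure_coe _
  have hRS_F : Set.range ridge ⊆ (F : Set C(K,ℝ)) := by
    rintro _ ⟨a, rfl⟩
    rw [hFset]
    exact hridge_mem a
  have hA_sub : ((Algebra.adjoin ℝ (Set.range ridge) : Subalgebra ℝ C(K,ℝ)) : Set C(K,ℝ))
      ⊆ (F : Set C(K,ℝ)) := by
    intro f hf
    have hf' : f ∈ Subalgebra.toSubmodule (Algebra.adjoin ℝ (Set.range ridge)) := hf
    rw [Algebra.adjoin_eq_span] at hf'
    have hsub : ((Submonoid.closure (Set.range ridge) : Submonoid C(K,ℝ)) : Set C(K,ℝ))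
        ⊆ (F : Set C(K,ℝ)) := by
      have hcl : Submonoid.closure (Set.range ridge) ≤ RSm :=
        Submonoid.closure_le.mpr (fun z hz => hz)
      intro z hz
      exact hRS_F (hcl hz)
    have : Submodule.span ℝ ((Submonoid.closure (Set.range ridge) : Submonoid C(K,ℝ)) : Set C(K,ℝ)) ≤ F :=
      Submodule.span_le.mpr hsub
    exact this hf'
  -- separation
  have hsep : (Algebra.adjoin ℝ (Set.range ridge)).SeparatesPoints := by
    intro x y hxy
    have hxy' : (x : Fin N → ℝ) ≠ (y : Fin N → ℝ) := fun hc => hxy (Subtype.ext hc)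
    obtain ⟨j, hj⟩ := Function.ne_iff.mp hxy'
    refine ⟨_, ⟨ridge (Pi.single j (1:ℝ)), Algebra.subset_adjoin ⟨_, rfl⟩, rfl⟩, ?_⟩
    have hsum : ∀ z : Fin N → ℝ, (∑ i, (Pi.single j (1:ℝ) : Fin N → ℝ) i * z i) = z j := by
      intro z
      rw [Finset.sum_eq_single j]
      · simp
      · intro i _ hij; simp [Pi.single_apply, hij]
      · intro hmem; exact absurd (Finset.mem_univ j) hmem
    show Real.exp (∑ i, (Pi.single j (1:ℝ) : Fin N → ℝ) i * (x : Fin N → ℝ) i)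
        ≠ Real.exp (∑ i, (Pi.single j (1:ℝ) : Fin N → ℝ) i * (y : Fin N → ℝ) i)
    rw [hsum, hsum]
    exact fun hc => hj (Real.exp_eq_exp.mp hc)
  have htop := ContinuousMap.subalgebra_topologicalClosure_eq_top_of_separatesPoints _ hsep
  have hg'mem : g' ∈ closure ((Submodule.span ℝ net : Submodule ℝ C(K,ℝ)) : Set C(K,ℝ)) := by
    have h1 : g' ∈ (Algebra.adjoin ℝ (Set.range ridge)).topologicalClosure := by
      rw [htop]; trivial
    have h2 : g' ∈ closure ((Algebra.adjoin ℝ (Set.range ridge) : Subalgebra ℝ C(K,ℝ)) : Set C(K,ℝ)) := h1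
    have h3 := closure_mono hA_sub h2
    rw [(Submodule.isClosed_topologicalClosure _).closure_eq] at h3
    rw [← hFset]
    exact h3
  rw [Metric.mem_closure_iff] at hg'mem
  obtain ⟨f, hfmem, hfdist⟩ := hg'mem ε hε
  obtain ⟨n, c, v, hsumf⟩ := Submodule.mem_span_set'.mp hfmem
  choose l1v l2v dv hdv av bv hval using fun i : Fin n => (v i).2
  refine ⟨n+1, Nat.succ_le_succ (Nat.zero_le n),
    Fin.snoc l1v 0, Fin.snoc l2v 0, Fin.snoc dv 1, Fin.snoc av 0, Fin.snoc bv 0,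
    Fin.snoc c 0, ?_, ?_⟩
  · intro k
    refine Fin.lastCases ?_ (fun i => ?_) k
    · simp only [Fin.snoc_last]; exact one_ne_zero
    · simp only [Fin.snoc_castSucc]; exact hdv i
  · intro x hx
    have hfx : f ⟨x, hx⟩ = ∑ i : Fin n,
        c i * cauchyActivation (l1v i) (l2v i) (dv i) ((∑ j, av i j * x j) + bv i) := by
      rw [← hsumf]
      have hev : ((∑ i : Fin n, c i • (v i : C(K,ℝ))) : C(K,ℝ)) ⟨x, hx⟩
          = ∑ i : Fin n, c i • ((v i : C(K,ℝ)) ⟨x, hx⟩) := by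
        simp
      rw [hev]
      refine Finset.sum_congr rfl fun i _ => ?_
      rw [hval i ⟨x, hx⟩]
      rfl
    have hsum' : (∑ k : Fin (n+1), (Fin.snoc c 0 : Fin (n+1) → ℝ) k *
        cauchyActivation ((Fin.snoc l1v 0 : Fin (n+1) → ℝ) k) ((Fin.snoc l2v 0 : Fin (n+1) → ℝ) k)
          ((Fin.snoc dv 1 : Fin (n+1) → ℝ) k)
          ((∑ j, (Fin.snoc av 0 : Fin (n+1) → Fin N → ℝ) k j * x j) + (Fin.snoc bv 0 : Fin (n+1) → ℝ) k))
        = ∑ i : Fin n, c i * cauchyActivation (l1v i) (l2v i) (dv i) ((∑ j, av i j * x j) + bv i) := by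
      rw [Fin.sum_univ_castSucc]
      simp only [Fin.snoc_castSucc, Fin.snoc_last, zero_mul, add_zero]
    rw [hsum', ← hfx]
    have h1 : g x - f ⟨x, hx⟩ = (g' - f) ⟨x, hx⟩ := by
      simp [g', Set.restrict_apply]; rfl
    rw [h1, ← Real.norm_eq_abs]
    calc ‖(g' - f) ⟨x, hx⟩‖ ≤ ‖g' - f‖ := ContinuousMap.norm_coe_le_norm _ _
    _ = dist g' f := by rw [dist_eq_norm]
    _ < ε := hfdist
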